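/- Under the conditions of the rigged connection ∇̄ on a null hypersurface N (torsion-free, with induced volume form ε_{abc} defined by -k_α ε_{abc} = η_{αμνσ} e^μ_a e^ν_b e^σ_c), the connection preserves the volume form if and only if the one-form φ_a := k^m H_{am} vanishes, where H_{ab} := e^α_a e^β_b ∇_α ℓ_β. That is, ∇̄_a ε_{bcd} = 0 ⟺ φ_a = 0. -/
import Mathlib


/-- The rigged connection on a null hypersurface preserves the induced volume
form `ε_{abc}` (defined by `-k_α ε_{abc} = η_{αμνσ}e^μ_a e^ν_b e^σ_c`) if and
only if the one-form `φ_a = k^m H_{am}` vanishes, where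
`H_{ab} = e^α_a e^β_b ∇_α ℓ_β`.  Pointwise formulation: `η` is the space-time
volume 4-form (an alternating 4-linear map), `Dk a = ∇_{e_a}k`,
`DL a = ∇_{e_a}L`, `De a b = ∇_{e_a}e_b` with Gauss decomposition,
`Dε a b c d = ∂_a ε_{bcd}` determined by differentiating the defining relation
(using `∇η = 0`), and `covε a b c d = ∇̄_a ε_{bcd}`. -/
theorem stmt_11 (W : Type*) [AddCommGroup W] [Module ℝ W]
    (g : W →ₗ[ℝ] W →ₗ[ℝ] ℝ) (hsym : ∀ u v : W, g u v = g v u)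
    (η : W [⋀^Fin 4]→ₗ[ℝ] ℝ)
    (e : Fin 3 → W) (k L : W)
    (hkN : ∀ a, g k (e a) = 0) (hknull : g k k = 0)
    (hLnull : g L L = 0) (hLk : g L k = -1)
    (kc : Fin 3 → ℝ) (hkc : k = ∑ a, kc a • e a)
    (ε : Fin 3 → Fin 3 → Fin 3 → ℝ)
    (hε : ∀ (w : W) (b c d : Fin 3), -(g k w) * ε b c d = η ![w, e b, e c, e d])
    (hεne : ε 0 1 2 ≠ 0)
    (De : Fin 3 → Fin 3 → W)
    (Γ : Fin 3 → Fin 3 → Fin 3 → ℝ) (Kf : Fin 3 → Fin 3 → ℝ)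
    (hGauss : ∀ a b, De a b = (∑ c, Γ a b c • e c) + Kf a b • L)
    (Dk DL : Fin 3 → W)
    -- differentiating g(L,k) = -1 along the frame:
    (hcomp : ∀ a, g (DL a) k + g L (Dk a) = 0)
    (H : Fin 3 → Fin 3 → ℝ) (hH : ∀ a b, H a b = g (DL a) (e b))
    (φ : Fin 3 → ℝ) (hφ : ∀ a, φ a = ∑ m, kc m * H a m)
    (Dε : Fin 3 → Fin 3 → Fin 3 → Fin 3 → ℝ)
    -- differentiated defining relation (space-time ∇η = 0):
    (hDrel : ∀ (a : Fin 3) (w : W) (b c d : Fin 3),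
      -(g (Dk a) w) * ε b c d - (g k w) * Dε a b c d =
        η ![w, De a b, e c, e d] + η ![w, e b, De a c, e d] + η ![w, e b, e c, De a d])
    (covε : Fin 3 → Fin 3 → Fin 3 → Fin 3 → ℝ)
    (hcovε : ∀ a b c d, covε a b c d = Dε a b c d
      - ∑ m, (Γ a b m * ε m c d + Γ a c m * ε b m d + Γ a d m * ε b c m)) :
    (∀ a b c d, covε a b c d = 0) ↔ (∀ a, φ a = 0) := by
  classical
  -- basic facts
  have hgkL : g k L = -1 := by rw [hsym]; exact hLk
  have hεL : ∀ b c d, η ![L, e b, e c, e d] = ε b c d := by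
    intro b c d
    rw [← hε L b c d, hgkL]; ring
  have hφk : ∀ a, g (DL a) k = φ a := by
    intro a
    rw [hφ, hkc, map_sum]
    refine Finset.sum_congr rfl fun m _ => ?_
    rw [map_smul, hH]; simp [mul_comm]
  have hDkL : ∀ a, g (Dk a) L = -φ a := by
    intro a
    have h := hcomp a
    have h2 : g L (Dk a) = g (Dk a) L := hsym _ _
    rw [hφk a, h2] at h
    linarith
  -- matrix-as-update lemmas
  have hupd1 : ∀ (x : W) (c d : Fin 3),
      ![L, x, e c, e d] = Function.update ![L, L, e c, e d] 1 x := by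
    intro x c d; ext i; fin_cases i <;> simp [Function.update]
  have hupd2 : ∀ (x : W) (b d : Fin 3),
      ![L, e b, x, e d] = Function.update ![L, e b, L, e d] 2 x := by
    intro x b d; ext i; fin_cases i <;> simp [Function.update]
  have hupd3 : ∀ (x : W) (b c : Fin 3),
      ![L, e b, e c, x] = Function.update ![L, e b, e c, L] 3 x := by
    intro x b c; ext i; fin_cases i <;> simp [Function.update]
  -- expansion of De in a slot, killing the L ∧ L term
  have hexp : ∀ (a b : Fin 3) (u : Fin 4 → W) (i j : Fin 4), i ≠ j → u j = L →
      η (Function.update u i (De a b)) = ∑ m, Γ a b m * η (Function.update u i (e m)) := by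
    intro a b u i j hij huj
    have hz : η (Function.update u i L) = 0 := by
      refine η.map_eq_zero_of_eq _ (?_ : Function.update u i L i = Function.update u i L j) hij
      rw [Function.update_self, Function.update_of_ne hij.symm, huj]
    rw [hGauss, Fin.sum_univ_three, AlternatingMap.map_update_add,
      AlternatingMap.map_update_add, AlternatingMap.map_update_add,
      AlternatingMap.map_update_smul, AlternatingMap.map_update_smul,
      AlternatingMap.map_update_smul, AlternatingMap.map_update_smul, hz,
      Fin.sum_univ_three]
    simp
  -- the key identity: ∇̄ε = -φ ⊗ ε
  have key : ∀ a b c d, covε a b c d = -(φ a) * ε b c d := by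
    intro a b c d
    have h1 := hDrel a L b c d
    rw [hgkL, hDkL a] at h1
    rw [hupd1 (De a b) c d, hupd2 (De a c) b d, hupd3 (De a d) b c] at h1
    rw [hexp a b _ 1 0 (by decide) rfl, hexp a c _ 2 0 (by decide) rfl,
      hexp a d _ 3 0 (by decide) rfl] at h1
    simp only [← hupd1, ← hupd2, ← hupd3, hεL] at h1
    rw [hcovε, Finset.sum_add_distrib, Finset.sum_add_distrib]
    linarith
  constructor
  · intro h a
    have h1 := key a 0 1 2
    rw [h a 0 1 2] at h1
    have h2 : φ a * ε 0 1 2 = 0 := by linarith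
    exact (mul_eq_zero.mp h2).resolve_right hεne
  · intro h a b c d
    rw [key, h a]; ring
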